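/- In the construction of X_{K[L]} from representations of K = S₃ and a representable DqRA L: (i) the map α_{K[L]} is an order automorphism of (X_{K[L]}, ≤_{X_{K[L]}}) whose graph is contained in E_{K[L]}; (ii) the map β_{K[L]} is a self-inverse dual order automorphism of (X_{K[L]}, ≤_{X_{K[L]}}) whose graph is contained in E_{K[L]}; (iii) α_{K[L]} ; β_{K[L]} ; α_{K[L]} = β_{K[L]}. -/
import Mathlib


universe u v

/-- The data needed to build the algebra `Dq(E)`: a poset `(X, le)`, an
equivalence relation `E ⊇ le`, an order automorphism `a` and a self-inverse
dual order automorphism `b` of the poset whose graphs are contained in `E`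
and which satisfy `β = α ; β ; α`. -/
structure RepBase {X : Type} (le : X → X → Prop) (E : Set (X × X)) (a b : X → X) : Prop where
  le_refl : ∀ u, le u u
  le_antisymm : ∀ u v, le u v → le v u → u = v
  le_trans : ∀ u v w, le u v → le v w → le u w
  equiv : Equivalence fun u v => (u, v) ∈ E
  le_sub : ∀ u v, le u v → (u, v) ∈ E
  a_bij : Function.Bijective a
  a_ord : ∀ u v, le u v ↔ le (a u) (a v)
  b_invol : ∀ u, b (b u) = u
  b_dual : ∀ u v, le u v ↔ le (b v) (b u)
  a_sub : ∀ u, (u, a u) ∈ E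
  b_sub : ∀ u, (u, b u) ∈ E
  aba : ∀ u, a (b (a u)) = b u

variable {XL : Type}

/-- The `E_L`-blocks of `X_L` (as a quotient of `X_L`). -/
def BlkQ (EL : Set (XL × XL)) : Type := Quot (fun u v : XL => (u, v) ∈ EL)

/-- The block of an element of `X_L`. -/
def blkMk (EL : Set (XL × XL)) (u : XL) : BlkQ EL :=
  Quot.mk (fun u v : XL => (u, v) ∈ EL) u

/-- The carrier of `X_{K[L]}` for `K = S₃`: `X_L` together with, for each
`E_L`-block `[z]`, an upper copy `^{[z]}X_K` and a lower copy `_{[z]}X_K` of the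
two-element antichain `X_K = {x, y}`.  An element of a copy is encoded as
`(block, upper?, y?)`. -/
abbrev XKL (EL : Set (XL × XL)) : Type := XL ⊕ (BlkQ EL × Bool × Bool)

/-- The block of an element of `X_{K[L]}`. -/
def blkOf (EL : Set (XL × XL)) : XKL EL → BlkQ EL
  | Sum.inl u => blkMk EL u
  | Sum.inr q => q.1

/-- The equivalence relation `E_{K[L]}`: the union of the squares
`([z] ∪ ^{[z]}X_K ∪ _{[z]}X_K)²` over the blocks `[z]`. -/
def EKL (EL : Set (XL × XL)) : Set (XKL EL × XKL EL) :=
  {p | blkOf EL p.1 = blkOf EL p.2}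

/-- The order `≤_{X_{K[L]}}`: the union of `≤_{X_L}`, the (discrete) orders on
all the copies of `X_K`, and the pairs `[z] × ^{[z]}X_K`, `_{[z]}X_K × [z]`
and `_{[z]}X_K × ^{[z]}X_K` for each block `[z]`. -/
def leKL (EL : Set (XL × XL)) (leL : XL → XL → Prop) : XKL EL → XKL EL → Prop
  | Sum.inl u, Sum.inl v => leL u v
  | Sum.inl u, Sum.inr q => q.2.1 = true ∧ blkMk EL u = q.1
  | Sum.inr q, Sum.inl v => q.2.1 = false ∧ blkMk EL v = q.1
  | Sum.inr q, Sum.inr q' => q = q' ∨ (q.1 = q'.1 ∧ q.2.1 = false ∧ q'.2.1 = true)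

/-- The order automorphism `α_{K[L]}`: `α_L` on `X_L`, and `α_K` (swapping
`x` and `y`) within each copy of `X_K`. -/
def aKL (EL : Set (XL × XL)) (aL : XL → XL) : XKL EL → XKL EL
  | Sum.inl u => Sum.inl (aL u)
  | Sum.inr q => Sum.inr (q.1, q.2.1, !q.2.2)

/-- The dual order automorphism `β_{K[L]}`: `β_L` on `X_L`, and (since
`β_K = id`) swapping the upper and lower copies of `X_K` of each block. -/
def bKL (EL : Set (XL × XL)) (bL : XL → XL) : XKL EL → XKL EL
  | Sum.inl u => Sum.inl (bL u)
  | Sum.inr q => Sum.inr (q.1, !q.2.1, q.2.2)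

/-- In the construction of `X_{K[L]}` from representations of
`K = S₃` (over the two-element antichain, with `α_K` the swap and `β_K = id`)
and of a representable DqRA `L`:
(i) `α_{K[L]}` is an order automorphism of `(X_{K[L]}, ≤_{X_{K[L]}})` whose
graph is contained in `E_{K[L]}`;
(ii) `β_{K[L]}` is a self-inverse dual order automorphism of `X_{K[L]}` whose
graph is contained in `E_{K[L]}`;
(iii) `α_{K[L]} ; β_{K[L]} ; α_{K[L]} = β_{K[L]}`. -/
theorem aKL_bKL_properties {XL : Type} (leL : XL → XL → Prop)
    (EL : Set (XL × XL)) (aL bL : XL → XL)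
    (hbase : RepBase leL EL aL bL) :
    -- (i)
    (Function.Bijective (aKL EL aL) ∧
      (∀ p q : XKL EL, leKL EL leL p q ↔ leKL EL leL (aKL EL aL p) (aKL EL aL q)) ∧
      (∀ p : XKL EL, (p, aKL EL aL p) ∈ EKL EL)) ∧
    -- (ii)
    ((∀ p : XKL EL, bKL EL bL (bKL EL bL p) = p) ∧
      Function.Bijective (bKL EL bL) ∧
      (∀ p q : XKL EL, leKL EL leL p q ↔ leKL EL leL (bKL EL bL q) (bKL EL bL p)) ∧
      (∀ p : XKL EL, (p, bKL EL bL p) ∈ EKL EL)) ∧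
    -- (iii)
    (∀ p : XKL EL, aKL EL aL (bKL EL bL (aKL EL aL p)) = bKL EL bL p) := by

  obtain ⟨aInv, haL, haR⟩ := Function.bijective_iff_has_inverse.mp hbase.a_bij
  have hblka : ∀ u, blkMk EL (aL u) = blkMk EL u := fun u =>
    (Quot.sound (hbase.a_sub u)).symm
  have hblkb : ∀ u, blkMk EL (bL u) = blkMk EL u := fun u =>
    (Quot.sound (hbase.b_sub u)).symm
  refine ⟨⟨?_, ?_, ?_⟩, ⟨?_, ?_, ?_, ?_⟩, ?_⟩
  · refine Function.bijective_iff_has_inverse.mpr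
      ⟨fun p => match p with
        | Sum.inl u => Sum.inl (aInv u)
        | Sum.inr q => Sum.inr (q.1, q.2.1, !q.2.2), ?_, ?_⟩
    · rintro (u | ⟨z, h, t⟩)
      · simp [aKL, haL u]
      · simp [aKL]
    · rintro (u | ⟨z, h, t⟩)
      · simp [aKL, haR u]
      · simp [aKL]
  · rintro (u | ⟨z, h, t⟩) (v | ⟨z', h', t'⟩) <;>
      simp [aKL, leKL, hblka, ← hbase.a_ord, Prod.ext_iff]
  · rintro (u | ⟨z, h, t⟩) <;> simp [aKL, EKL, blkOf, hblka]
  · rintro (u | ⟨z, h, t⟩) <;> simp [bKL, hbase.b_invol]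
  · refine Function.bijective_iff_has_inverse.mpr
      ⟨bKL EL bL, ?_, ?_⟩ <;>
      rintro (u | ⟨z, h, t⟩) <;> simp [bKL, hbase.b_invol]
  · rintro (u | ⟨z, h, t⟩) (v | ⟨z', h', t'⟩) <;>
      simp [bKL, leKL, hblkb, ← hbase.b_dual, Prod.ext_iff] <;> tauto
  · rintro (u | ⟨z, h, t⟩) <;> simp [bKL, EKL, blkOf, hblkb]
  · rintro (u | ⟨z, h, t⟩) <;> simp [aKL, bKL, hbase.aba]
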